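/- Let H be a real Hilbert space and β > 0. Define the iteration map on pairs: given (r^{(m-1)}, known data), each step produces λ^{(m)} ∈ H and sets r^{(m)} = 2βλ^{(m)} − r^{(m-1)}. Suppose along the iteration ⟨βλ^{(m)} − r^{(m-1)}, λ^{(m)}⟩ = −S_m with S_m ≥ 0 for all m, and r^{(0)} is given. Then for all m, β^{-1}‖r^{(m)}‖² = β^{-1}‖r^{(0)}‖² − 4∑_{i=1}^{m} S_i; consequently, if S_m ≥ c·‖λ^{(m)}‖² for some c > 0, then λ^{(m)} → 0 in H as m → ∞. -/
import Mathlib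


open RealInnerProductSpace Filter

/-- Energy identity for the domain-decomposition iteration and convergence of
the dual-variable iterates under a coercivity assumption on the stabilizer
energy. -/
theorem stmt_10 {H : Type*} [NormedAddCommGroup H] [InnerProductSpace ℝ H]
    [CompleteSpace H]
    (β : ℝ) (hβ : 0 < β)
    (lam r : ℕ → H) (S : ℕ → ℝ)
    (hr : ∀ m : ℕ, r (m + 1) = (2 * β) • lam (m + 1) - r m)
    (hbal : ∀ m : ℕ, ⟪β • lam (m + 1) - r m, lam (m + 1)⟫ = - S (m + 1))
    (hS : ∀ m : ℕ, 0 ≤ S (m + 1)) :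
    (∀ m : ℕ, β⁻¹ * ‖r m‖ ^ 2
        = β⁻¹ * ‖r 0‖ ^ 2 - 4 * ∑ i ∈ Finset.range m, S (i + 1)) ∧
    (∀ c : ℝ, 0 < c → (∀ m : ℕ, c * ‖lam (m + 1)‖ ^ 2 ≤ S (m + 1)) →
      Tendsto lam atTop (nhds 0)) := by
  have hbal' : ∀ m : ℕ, β * ‖lam (m + 1)‖ ^ 2 - ⟪r m, lam (m + 1)⟫ = - S (m + 1) := by
    intro m
    have := hbal m
    rwa [inner_sub_left, real_inner_smul_left, real_inner_self_eq_norm_sq] at this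
  have key : ∀ m : ℕ, β⁻¹ * ‖r (m + 1)‖ ^ 2 = β⁻¹ * ‖r m‖ ^ 2 - 4 * S (m + 1) := by
    intro m
    have h1 : ‖r (m + 1)‖ ^ 2
        = 4 * β ^ 2 * ‖lam (m + 1)‖ ^ 2 - 2 * (2 * β * ⟪lam (m + 1), r m⟫) + ‖r m‖ ^ 2 := by
      rw [hr m, @norm_sub_sq_real, norm_smul, real_inner_smul_left]
      have : |2 * β| = 2 * β := abs_of_pos (by linarith)
      rw [Real.norm_eq_abs, this]
      ring
    have hsym : ⟪lam (m + 1), r m⟫ = ⟪r m, lam (m + 1)⟫ := real_inner_comm _ _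
    rw [h1, hsym]
    have hb := hbal' m
    field_simp
    nlinarith [hb]
  have energy : ∀ m : ℕ, β⁻¹ * ‖r m‖ ^ 2
      = β⁻¹ * ‖r 0‖ ^ 2 - 4 * ∑ i ∈ Finset.range m, S (i + 1) := by
    intro m
    induction m with
    | zero => simp
    | succ n ih =>
      rw [key n, ih, Finset.sum_range_succ]
      ring
  refine ⟨energy, ?_⟩
  intro c hc hcoer
  -- partial sums of nonneg S are bounded
  have hsum_le : ∀ m : ℕ, ∑ i ∈ Finset.range m, S (i + 1) ≤ β⁻¹ * ‖r 0‖ ^ 2 / 4 := by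
    intro m
    have h := energy m
    have hnn : 0 ≤ β⁻¹ * ‖r m‖ ^ 2 :=
      mul_nonneg (inv_nonneg.mpr hβ.le) (sq_nonneg _)
    linarith
  have hsummable : Summable (fun i => S (i + 1)) :=
    summable_of_sum_range_le (fun i => hS i) hsum_le
  have hS0 : Tendsto (fun i => S (i + 1)) atTop (nhds 0) := hsummable.tendsto_atTop_zero
  have hsq : Tendsto (fun m => ‖lam (m + 1)‖ ^ 2) atTop (nhds 0) := by
    apply squeeze_zero (fun m => sq_nonneg _) (fun m => ?_)
      (by simpa using hS0.const_mul c⁻¹)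
    calc ‖lam (m + 1)‖ ^ 2 = c⁻¹ * (c * ‖lam (m + 1)‖ ^ 2) := by
          field_simp
      _ ≤ c⁻¹ * S (m + 1) := by
          have := hcoer m
          have h0 : 0 ≤ c⁻¹ := inv_nonneg.mpr hc.le
          nlinarith
  have hnorm : Tendsto (fun m => ‖lam (m + 1)‖) atTop (nhds 0) := by
    have := (Real.continuous_sqrt.tendsto 0).comp hsq
    have heq : ((fun x => Real.sqrt x) ∘ fun m => ‖lam (m + 1)‖ ^ 2)
        = fun m => ‖lam (m + 1)‖ := by
      funext m; simp [Function.comp, Real.sqrt_sq (norm_nonneg _)]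
    rw [heq] at this; simpa using this
  have : Tendsto (fun m => ‖lam m‖) atTop (nhds 0) :=
    (tendsto_add_atTop_iff_nat 1).mp hnorm
  exact tendsto_zero_iff_norm_tendsto_zero.mpr this
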